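/- Let H : [0,1] → [0,1]^d satisfy the change-of-variables identity ∫_{[0,1]^d} f(x) dx = ∫₀¹ f(H(s)) ds for all integrable f. Let μ be an absolutely continuous probability measure on [0,1]^d with density f_μ, and define g_μ(t) = ∫₀^t f_μ(H(s)) ds. If Z is a real random variable whose cumulative distribution function is g_μ, then the random vector H(Z) has law μ, i.e. P(H(Z) ∈ A) = ∫_A f_μ(x) dx for every Borel set A ⊆ [0,1]^d. -/

import Mathlib

open MeasureTheory

/-- Lemma 1: if `Z` has cumulative distribution function `g_μ(t) = ∫₀^t f_μ(H(s)) ds`,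
then `H(Z)` has law `μ` (the measure with density `f_μ`). -/
theorem law_of_hilbert_composition {d : ℕ}
    (H : ℝ → (Fin d → ℝ)) (hH : Measurable H)
    (fμ : (Fin d → ℝ) → ℝ)
    (hchg : ∀ g : (Fin d → ℝ) → ℝ, IntegrableOn g (Set.Icc (0 : Fin d → ℝ) 1) →
      ∫ x in Set.Icc (0 : Fin d → ℝ) 1, g x = ∫ s in Set.Icc (0:ℝ) 1, g (H s))
    (μ : Measure (Fin d → ℝ)) [IsProbabilityMeasure μ]
    (hμ : ∀ A : Set (Fin d → ℝ), MeasurableSet A →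
      μ A = ENNReal.ofReal (∫ x in A, fμ x))
    {Ω : Type*} [MeasureSpace Ω] [IsProbabilityMeasure (volume : Measure Ω)]
    (Z : Ω → ℝ) (hZ : Measurable Z)
    (hcdf : ∀ t : ℝ, volume {ω | Z ω ≤ t}
      = ENNReal.ofReal (∫ s in Set.Icc (0:ℝ) (min t 1), fμ (H s))) :
    ∀ A : Set (Fin d → ℝ), MeasurableSet A →
      volume {ω | H (Z ω) ∈ A} = ENNReal.ofReal (∫ x in A, fμ x) := by
  have hI1m : MeasurableSet (Set.Icc (0:ℝ) 1) := measurableSet_Icc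
  have hIdm : MeasurableSet (Set.Icc (0:Fin d → ℝ) 1) := measurableSet_Icc
  have hvolId : volume (Set.Icc (0:Fin d → ℝ) 1) < ⊤ := isCompact_Icc.measure_lt_top
  have hvolI1 : volume (Set.Icc (0:ℝ) 1) < ⊤ := isCompact_Icc.measure_lt_top
  -- `fμ` is integrable with total integral 1
  have h0 : (1:ENNReal) = ENNReal.ofReal (∫ x, fμ x) := by
    have h := hμ Set.univ MeasurableSet.univ
    rwa [measure_univ, Measure.restrict_univ] at h
  have hIntU : Integrable fμ (volume : Measure (Fin d → ℝ)) := by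
    by_contra hc
    rw [integral_undef hc] at h0; simp at h0
  have hint1 : ∫ x, fμ x = 1 := ENNReal.ofReal_eq_one.mp h0.symm
  -- pullback of null sets along `H`
  have hpull : ∀ S : Set (Fin d → ℝ), MeasurableSet S →
      volume (S ∩ Set.Icc (0:Fin d → ℝ) 1) = 0 →
      (volume.restrict (Set.Icc (0:ℝ) 1)) (H ⁻¹' S) = 0 := by
    intro S hS hS0
    have hgint : IntegrableOn (S.indicator (fun _ => (1:ℝ)))
        (Set.Icc (0:Fin d → ℝ) 1) := by
      exact (IntegrableOn.indicator ((integrableOn_const_iff).mpr (Or.inr hvolId)) hS)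
    have key := hchg _ hgint
    rw [setIntegral_indicator hS] at key
    have hcomp : ∀ s, S.indicator (fun _ => (1:ℝ)) (H s)
        = (H ⁻¹' S).indicator (fun _ => (1:ℝ)) s := by
      intro s; by_cases h : H s ∈ S <;> simp [Set.indicator_apply, h]
    simp_rw [hcomp] at key
    rw [setIntegral_indicator (hH hS)] at key
    rw [setIntegral_const, setIntegral_const, smul_eq_mul, smul_eq_mul,
      mul_one, mul_one, Set.inter_comm, measureReal_def, measureReal_def, hS0] at key
    have hfin : volume (Set.Icc (0:ℝ) 1 ∩ H ⁻¹' S) ≠ ⊤ :=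
      (lt_of_le_of_lt (measure_mono Set.inter_subset_left) hvolI1).ne
    have hz : volume (Set.Icc (0:ℝ) 1 ∩ H ⁻¹' S) = 0 := by
      rw [ENNReal.toReal_zero] at key
      rcases (ENNReal.toReal_eq_zero_iff _).mp key.symm with h2 | h2
      · exact h2
      · exact absurd h2 hfin
    rw [Measure.restrict_apply (hH hS), Set.inter_comm]
    exact hz
  -- measurable representative of `fμ`
  set fm : (Fin d → ℝ) → ℝ := hIntU.aestronglyMeasurable.mk fμ with hfm
  have hfm_meas : Measurable fm :=
    hIntU.aestronglyMeasurable.stronglyMeasurable_mk.measurable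
  have hfme : fμ =ᵐ[volume] fm := hIntU.aestronglyMeasurable.ae_eq_mk
  obtain ⟨N, hNsub, hNm, hN0⟩ :=
    exists_measurable_superset_of_null (ae_iff.mp hfme)
  have htransfer : ∀ᵐ s ∂(volume.restrict (Set.Icc (0:ℝ) 1)),
      fμ (H s) = fm (H s) := by
    have h2 := hpull N hNm
      (le_antisymm (le_trans (measure_mono Set.inter_subset_left) hN0.le) (zero_le))
    have h3 : ∀ᵐ s ∂(volume.restrict (Set.Icc (0:ℝ) 1)), H s ∉ N :=
      (measure_eq_zero_iff_ae_notMem).mp h2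
    filter_upwards [h3] with s hs
    by_contra h
    exact hs (hNsub h)
  -- `fμ` is a.e. nonnegative
  have hnn : 0 ≤ᵐ[(volume : Measure (Fin d → ℝ))] fμ := by
    set S := {x | fm x < 0} with hSdef
    have hSm : MeasurableSet S := measurableSet_lt hfm_meas measurable_const
    have hle : ∀ᵐ x ∂(volume.restrict S), fμ x ≤ 0 := by
      filter_upwards [ae_restrict_mem hSm, ae_restrict_of_ae hfme] with x hx hx2
      rw [hx2]; exact le_of_lt hx
    have hintS_le : ∫ x in S, fμ x ≤ 0 := integral_nonpos_of_ae hle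
    have hcompl : (∫ x in S, fμ x) + ∫ x in Sᶜ, fμ x = 1 := by
      rw [← hint1]
      exact integral_add_compl hSm hIntU
    have hμS : μ Sᶜ ≤ 1 := prob_le_one
    rw [hμ Sᶜ hSm.compl] at hμS
    have h5 : (0:ℝ) ≤ ∫ x in S, fμ x := by
      by_contra h; push_neg at h
      have hlt : (1:ENNReal) < ENNReal.ofReal (∫ x in Sᶜ, fμ x) := by
        rw [← ENNReal.ofReal_one]
        exact (ENNReal.ofReal_lt_ofReal_iff (by linarith)).mpr (by linarith)
      exact absurd hμS (not_le.mpr hlt)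
    have hS0' : ∫ x in S, fμ x = 0 := le_antisymm hintS_le h5
    have h6 : fμ =ᵐ[volume.restrict S] 0 := by
      have hneg : 0 ≤ᵐ[volume.restrict S] fun x => -fμ x := by
        filter_upwards [hle] with x hx; simpa using hx
      have hnegint : Integrable (fun x => -fμ x) (volume.restrict S) :=
        hIntU.integrableOn.neg
      have hnz : ∫ x in S, -fμ x = 0 := by
        rw [integral_neg, hS0', neg_zero]
      have h7 := (integral_eq_zero_iff_of_nonneg_ae hneg hnegint).mp hnz
      filter_upwards [h7] with x hx
      have hx' : -fμ x = 0 := hx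
      simp only [Pi.zero_apply]
      linarith
    have h7 : volume S = 0 := by
      by_contra h7c
      have h9 : ∀ᵐ x ∂(volume.restrict S), False := by
        filter_upwards [ae_restrict_mem hSm, ae_restrict_of_ae hfme, h6] with x hx hx2 hx3
        have hz : fμ x = 0 := hx3
        have hlt : fm x < 0 := hx
        rw [hx2] at hz
        exact absurd hz (ne_of_lt hlt)
      rw [Filter.eventually_false_iff_eq_bot, ae_eq_bot,
        Measure.restrict_eq_zero] at h9
      exact h7c h9
    have h10 : ∀ᵐ x ∂(volume : Measure (Fin d → ℝ)), x ∉ S :=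
      (measure_eq_zero_iff_ae_notMem).mp h7
    filter_upwards [h10, hfme] with x hx he
    simp only [Pi.zero_apply]
    by_contra h; push_neg at h
    apply hx
    rw [hSdef]; simp only [Set.mem_setOf_eq]
    rw [← he]; exact h
  -- total mass along the curve is 1
  have hc1 : ENNReal.ofReal (∫ s in Set.Icc (0:ℝ) 1, fμ (H s)) = 1 := by
    have hcst : ∀ n : ℕ, volume {ω | Z ω ≤ (n:ℝ)+1}
        = ENNReal.ofReal (∫ s in Set.Icc (0:ℝ) 1, fμ (H s)) := by
      intro n
      rw [hcdf ((n:ℝ)+1),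
        min_eq_right (le_add_of_nonneg_left (Nat.cast_nonneg n))]
    have hmono : Monotone (fun n : ℕ => {ω | Z ω ≤ (n:ℝ)+1}) := by
      intro a b hab ω hω
      simp only [Set.mem_setOf_eq] at hω ⊢
      have hc : (a:ℝ) ≤ b := Nat.cast_le.mpr hab
      linarith
    have hun : (⋃ n : ℕ, {ω | Z ω ≤ (n:ℝ)+1}) = Set.univ := by
      ext ω
      simp only [Set.mem_iUnion, Set.mem_univ, iff_true, Set.mem_setOf_eq]
      obtain ⟨n, hn⟩ := exists_nat_ge (Z ω)
      exact ⟨n, by linarith⟩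
    have hiU := Directed.measure_iUnion (μ := (volume : Measure Ω))
      hmono.directed_le
    rw [hun, measure_univ] at hiU
    simp_rw [hcst] at hiU
    rw [iSup_const] at hiU
    exact hiU.symm
  have hIntH : IntegrableOn (fun s => fμ (H s)) (Set.Icc (0:ℝ) 1) volume := by
    by_contra hc
    rw [integral_undef hc] at hc1; simp at hc1
  have hintH1 : ∫ s in Set.Icc (0:ℝ) 1, fμ (H s) = 1 := ENNReal.ofReal_eq_one.mp hc1
  -- nonnegativity of `fμ ∘ H` a.e. on `[0,1]`
  obtain ⟨S₀, hS₀sub, hS₀m, hS₀0⟩ :=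
    exists_measurable_superset_of_null (ae_iff.mp hnn)
  have hnnH : 0 ≤ᵐ[volume.restrict (Set.Icc (0:ℝ) 1)] fun s => fμ (H s) := by
    have h2 := hpull S₀ hS₀m
      (le_antisymm (le_trans (measure_mono Set.inter_subset_left) hS₀0.le) (zero_le))
    have h3 : ∀ᵐ s ∂(volume.restrict (Set.Icc (0:ℝ) 1)), H s ∉ S₀ :=
      (measure_eq_zero_iff_ae_notMem).mp h2
    filter_upwards [h3] with s hs
    simp only [Pi.zero_apply]
    by_contra h; push_neg at h
    refine hs (hS₀sub ?_)
    simp only [Set.mem_setOf_eq, Pi.zero_apply]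
    exact not_le.mpr h
  -- the candidate law of `Z`
  set lam : Measure ℝ := (volume.restrict (Set.Icc (0:ℝ) 1)).withDensity
    (fun s => ENNReal.ofReal (fμ (H s))) with hlam
  have hswap : ∀ T : Set ℝ, MeasurableSet T → T ⊆ Set.Icc (0:ℝ) 1 →
      ∫⁻ s in T, ENNReal.ofReal (fμ (H s)) = ENNReal.ofReal (∫ s in T, fμ (H s)) := by
    intro T hT hTsub
    rw [← ofReal_integral_eq_lintegral_ofReal (hIntH.mono_set hTsub)
      (ae_restrict_of_ae_restrict_of_subset hTsub hnnH)]
  have hlam_apply : ∀ T : Set ℝ, MeasurableSet T →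
      lam T = ENNReal.ofReal (∫ s in T ∩ Set.Icc (0:ℝ) 1, fμ (H s)) := by
    intro T hT
    rw [hlam, withDensity_apply _ hT, Measure.restrict_restrict hT,
      hswap _ (hT.inter hI1m) Set.inter_subset_right]
  haveI hlamfin : IsFiniteMeasure lam := by
    constructor
    rw [hlam_apply _ MeasurableSet.univ, Set.univ_inter, hintH1]
    simp
  -- identify the law of `Z`
  have hmap : Measure.map Z volume = lam := by
    haveI : IsProbabilityMeasure (Measure.map Z volume) :=
      Measure.isProbabilityMeasure_map hZ.aemeasurable
    refine MeasureTheory.Measure.ext_of_Iic _ _ (fun t => ?_)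
    rw [Measure.map_apply hZ measurableSet_Iic, hlam_apply _ measurableSet_Iic]
    have hIic : Set.Iic t ∩ Set.Icc (0:ℝ) 1 = Set.Icc 0 (min t 1) := by
      ext x
      simp only [Set.mem_inter_iff, Set.mem_Iic, Set.mem_Icc, le_min_iff]
      tauto
    rw [hIic]
    exact hcdf t
  -- reduce set integrals to the cube
  have hIccInt : ∫ x in Set.Icc (0:Fin d → ℝ) 1, fμ x = 1 := by
    rw [hchg fμ hIntU.integrableOn]; exact hintH1
  have hzero_off : fμ =ᵐ[volume.restrict (Set.Icc (0:Fin d → ℝ) 1)ᶜ] 0 := by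
    have hof : ∫ x in (Set.Icc (0:Fin d → ℝ) 1)ᶜ, fμ x = 0 := by
      have h := integral_add_compl hIdm hIntU (f := fμ) (μ := volume)
      rw [hint1, hIccInt] at h
      linarith
    exact (integral_eq_zero_iff_of_nonneg_ae (ae_restrict_of_ae hnn)
      hIntU.integrableOn).mp hof
  have hind : fμ =ᵐ[(volume : Measure (Fin d → ℝ))]
      (Set.Icc (0:Fin d → ℝ) 1).indicator fμ := by
    have himp := ae_imp_of_ae_restrict hzero_off
    filter_upwards [himp] with x hx
    by_cases h : x ∈ Set.Icc (0:Fin d → ℝ) 1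
    · rw [Set.indicator_of_mem h]
    · rw [Set.indicator_of_notMem h]
      exact hx h
  have hAint : ∀ A : Set (Fin d → ℝ), MeasurableSet A →
      ∫ x in A, fμ x = ∫ x in Set.Icc (0:Fin d → ℝ) 1 ∩ A, fμ x := by
    intro A hA
    rw [Set.inter_comm, ← setIntegral_indicator hIdm]
    exact integral_congr_ae (ae_restrict_of_ae hind)
  -- conclusion
  intro A hA
  show volume (Z ⁻¹' (H ⁻¹' A)) = ENNReal.ofReal (∫ x in A, fμ x)
  rw [← Measure.map_apply hZ (hH hA), hmap, hlam_apply _ (hH hA)]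
  congr 1
  have key := hchg (A.indicator fμ) ((hIntU.indicator hA).integrableOn)
  rw [setIntegral_indicator hA] at key
  have hcomp : ∀ s, A.indicator fμ (H s)
      = (H ⁻¹' A).indicator (fun s => fμ (H s)) s := by
    intro s; by_cases h : H s ∈ A <;> simp [Set.indicator_apply, h]
  simp_rw [hcomp] at key
  rw [setIntegral_indicator (hH hA)] at key
  rw [hAint A hA, key, Set.inter_comm (H ⁻¹' A) (Set.Icc (0:ℝ) 1)]
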